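/- If E′ ⊆ E is a sub-(a,b)-module of a regular (a,b)-module E such that E/E′ has no b-torsion, then δ(E′) ≤ δ(E). -/
import Mathlib


set_option synthInstance.maxHeartbeats 1000000
set_option maxHeartbeats 1000000

open PowerSeries

noncomputable section

/-- `ℂ[[b]]`. -/
abbrev Rb := PowerSeries ℂ

variable {E : Type} [AddCommGroup E] [Module Rb E]
  [Module ℂ E] [IsScalarTower ℂ Rb E]

/-- Multiplication by `bⁿ`, i.e. the submodule `bⁿ·G` of a `ℂ[[b]]`-module. -/
def bpow (n : ℕ) (G : Submodule Rb E) : Submodule Rb E :=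
  (Ideal.span {(X : Rb) ^ n}) • G

/-- The operator `b` (multiplication by `X`) as a `ℂ`-linear endomorphism. -/
def bop : E →ₗ[ℂ] E := (LinearMap.lsmul Rb E (X : Rb)).restrictScalars ℂ

/-- An (a,b)-module structure: `E` is a free finite-rank `ℂ[[b]]`-module
and `a` is a `ℂ`-linear, `b`-adically continuous endomorphism with
`a·b − b·a = b²`; equivalently, `a(S·x) = S·a(x) + b²·S'(b)·x` for all
`S ∈ ℂ[[b]]`. -/
def IsABMod (a : E →ₗ[ℂ] E) : Prop :=
  ∀ (S : Rb) (x : E), a (S • x) = S • a x + ((X : Rb) ^ 2 * derivative ℂ S) • x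

/-- The operators `Tⱼ = bʲ·(b⁻¹a)ʲ`, defined recursively by `T₀ = id`,
`T_{j+1} = (a − j·b)∘Tⱼ`. -/
def Tj (a : E →ₗ[ℂ] E) : ℕ → (E →ₗ[ℂ] E)
  | 0 => LinearMap.id
  | (j + 1) => (a - (j : ℂ) • bop) ∘ₗ Tj a j

/-- The `ℂ`-subspace `Σ_{j=0}^{k} aʲ·b^{k−j+1}·E`. -/
def Psi (a : E →ₗ[ℂ] E) (k : ℕ) : Submodule ℂ E :=
  ⨆ j ∈ Finset.range (k + 1),
    Submodule.map (a ^ j) ((bpow (k - j + 1) ⊤).restrictScalars ℂ)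

/-- The regularity condition `a^{k+1}·E ⊆ Σ_{j=0}^{k} aʲ·b^{k−j+1}·E`. -/
def RegCond (a : E →ₗ[ℂ] E) (k : ℕ) : Prop :=
  ∀ x : E, (a ^ (k + 1)) x ∈ Psi a k

/-- `E` is regular (equivalently: some regularity condition holds). -/
def IsRegularAB (a : E →ₗ[ℂ] E) : Prop := ∃ k, RegCond a k

/-- The regularity order `or(E)`. -/
def regOrder (a : E →ₗ[ℂ] E) : ℕ := sInf {k | RegCond a k}

/-- `b^k·E^♯ = b^k·Φ_k(E) = Σ_{j=0}^{k} b^{k−j}·Tⱼ(E)`: the saturation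
`E^♯ = Σ_j (b⁻¹a)ʲ·E` of `E`, renormalized by `b^k` so as to live inside `E`. -/
def Wsat (a : E →ₗ[ℂ] E) (k : ℕ) : Submodule Rb E :=
  Submodule.span Rb
    (⋃ j ∈ Finset.range (k + 1), Set.range fun x : E => ((X : Rb) ^ (k - j)) • (Tj a j x))

/-- A submodule `G ⊆ E` is a simple-pole submodule when `a·G ⊆ b·G`. -/
def SimplePoleSub (a : E →ₗ[ℂ] E) (G : Submodule Rb E) : Prop :=
  ∀ x ∈ G, a x ∈ bpow 1 G

/-- The index `δ(E)`: the smallest `m` with `E^♯ ⊆ b^{−m}·E`,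
i.e. `bᵐ·E^♯ ⊆ E`, i.e. `bᵐ·(b^k·E^♯) ⊆ b^k·E` for `k = or(E)`. -/
def deltaIdx (a : E →ₗ[ℂ] E) : ℕ :=
  sInf {m | bpow m (Wsat a (regOrder a)) ≤ bpow (regOrder a) ⊤}

/-- The biggest simple-pole submodule `E^b` of `E`. -/
def Eb (a : E →ₗ[ℂ] E) : Submodule Rb E := sSup {G | SimplePoleSub a G}

set_option linter.unusedSectionVars false
set_option linter.unusedVariables false
set_option linter.unnecessarySimpa false

open Pointwise in

lemma mem_bpow {n : ℕ} {G : Submodule Rb E} {x : E} :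
    x ∈ bpow n G ↔ ∃ g ∈ G, (X : Rb) ^ n • g = x := by
  rw [bpow, Submodule.ideal_span_singleton_smul, ← SetLike.mem_coe,
    Submodule.coe_pointwise_smul]
  exact Set.mem_smul_set

lemma bpow_mem {n : ℕ} {G : Submodule Rb E} {g : E} (hg : g ∈ G) :
    (X : Rb) ^ n • g ∈ bpow n G := mem_bpow.2 ⟨g, hg, rfl⟩

lemma gen_mem_Wsat (a : E →ₗ[ℂ] E) {i j : ℕ} (hij : i ≤ j) (x : E) :
    (X : Rb) ^ (j - i) • Tj a i x ∈ Wsat a j := by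
  refine Submodule.subset_span (Set.mem_iUnion₂.2 ⟨i, Finset.mem_range.2 (by omega), ⟨x, rfl⟩⟩)

lemma T_mem_Wsat (a : E →ₗ[ℂ] E) (j : ℕ) (x : E) : Tj a j x ∈ Wsat a j := by
  simpa using gen_mem_Wsat a (le_refl j) x

lemma comm1 {a : E →ₗ[ℂ] E} (ha : IsABMod a) (x : E) :
    a ((X : Rb) • x) = (X : Rb) • a x + ((X : Rb) ^ 2) • x := by
  have h := ha X x
  rwa [PowerSeries.derivative_X, mul_one] at h

lemma commn {a : E →ₗ[ℂ] E} (ha : IsABMod a) (n : ℕ) (x : E) :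
    a ((X : Rb) ^ n • x) = (X : Rb) ^ n • a x + ((n : ℂ) • (X : Rb) ^ (n + 1)) • x := by
  induction n with
  | zero => simp
  | succ n ih =>
    have hx : (X : Rb) ^ (n + 1) • x = (X : Rb) • ((X : Rb) ^ n • x) := by
      rw [smul_smul, ← pow_succ']
    rw [hx, comm1 ha, ih, smul_add, smul_smul, smul_smul, smul_smul, ← pow_succ']
    have h1 : (X : Rb) * ((n : ℂ) • (X : Rb) ^ (n + 1)) = (n : ℂ) • (X : Rb) ^ (n + 2) := by
      rw [mul_smul_comm, ← pow_succ']
    have h2 : (X : Rb) ^ 2 * (X : Rb) ^ n = (X : Rb) ^ (n + 2) := by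
      rw [← pow_add]; ring_nf
    rw [h1, h2, add_assoc, ← add_smul]
    congr 2
    push_cast
    rw [add_smul, one_smul]

lemma smulX_Wsat (a : E →ₗ[ℂ] E) {j : ℕ} {w : E} (hw : w ∈ Wsat a j) :
    (X : Rb) • w ∈ Wsat a (j + 1) := by
  induction hw using Submodule.span_induction with
  | mem g hg =>
    simp only [Set.mem_iUnion, Set.mem_range, Finset.mem_range] at hg
    obtain ⟨i, hi, x, rfl⟩ := hg
    have h1 : (X : Rb) • ((X : Rb) ^ (j - i) • Tj a i x)
        = (X : Rb) ^ (j + 1 - i) • Tj a i x := by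
      rw [smul_smul, ← pow_succ']
      congr 2
      omega
    rw [h1]
    exact gen_mem_Wsat a (by omega) x
  | zero => simp
  | add u v _ _ h1 h2 => rw [smul_add]; exact add_mem h1 h2
  | smul S w _ h => rw [smul_comm]; exact Submodule.smul_mem _ S h

lemma smulXpow_Wsat (a : E →ₗ[ℂ] E) {j : ℕ} (d : ℕ) {w : E} (hw : w ∈ Wsat a j) :
    (X : Rb) ^ d • w ∈ Wsat a (j + d) := by
  induction d with
  | zero => simpa using hw
  | succ d ih =>
    have h1 : (X : Rb) ^ (d + 1) • w = (X : Rb) • ((X : Rb) ^ d • w) := by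
      rw [smul_smul, ← pow_succ']
    rw [h1, ← Nat.add_assoc]
    exact smulX_Wsat a ih

lemma aT_eq (a : E →ₗ[ℂ] E) (i : ℕ) (x : E) :
    a (Tj a i x) = Tj a (i + 1) x + (i : ℂ) • ((X : Rb) • Tj a i x) := by
  simp only [Tj, LinearMap.comp_apply, LinearMap.sub_apply, LinearMap.smul_apply]
  have : bop (Tj a i x) = (X : Rb) • Tj a i x := rfl
  rw [this]
  abel

lemma a_Wsat {a : E →ₗ[ℂ] E} (ha : IsABMod a) {j : ℕ} {w : E} (hw : w ∈ Wsat a j) :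
    a w ∈ Wsat a (j + 1) := by
  induction hw using Submodule.span_induction with
  | mem g hg =>
    simp only [Set.mem_iUnion, Set.mem_range, Finset.mem_range] at hg
    obtain ⟨i, hi, x, rfl⟩ := hg
    rw [commn ha, aT_eq, smul_add]
    refine add_mem (add_mem ?_ ?_) ?_
    · have h1 : (j : ℕ) - i = (j + 1) - (i + 1) := by omega
      rw [h1]
      exact gen_mem_Wsat a (by omega) x
    · rw [smul_comm, smul_smul, ← pow_succ]
      have h1 : (j : ℕ) - i + 1 = (j + 1) - i := by omega
      rw [h1]
      exact Submodule.smul_of_tower_mem _ _ (gen_mem_Wsat a (by omega) x)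
    · rw [smul_assoc]
      have h1 : (j : ℕ) - i + 1 = (j + 1) - i := by omega
      rw [h1]
      exact Submodule.smul_of_tower_mem _ _ (gen_mem_Wsat a (by omega) x)
  | zero => simp
  | add u v _ _ h1 h2 => rw [map_add]; exact add_mem h1 h2
  | smul S w hw h =>
    rw [ha S w]
    refine add_mem (Submodule.smul_mem _ S h) ?_
    have h1 : ((X : Rb) ^ 2 * derivative ℂ S) • w
        = ((X : Rb) * derivative ℂ S) • ((X : Rb) • w) := by
      rw [smul_smul]; ring_nf
    rw [h1]
    exact Submodule.smul_mem _ _ (smulX_Wsat a hw)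

lemma pow_a_bpow {a : E →ₗ[ℂ] E} (ha : IsABMod a) (j n : ℕ) (x : E) :
    (a ^ j) ((X : Rb) ^ n • x) ∈ bpow n (Wsat a j) := by
  induction j with
  | zero =>
    simp only [pow_zero, Module.End.one_apply]
    exact bpow_mem (by simpa [Tj] using T_mem_Wsat a 0 x)
  | succ j ih =>
    obtain ⟨w, hw, hwe⟩ := mem_bpow.1 ih
    rw [pow_succ', Module.End.mul_apply, ← hwe, commn ha]
    refine add_mem (bpow_mem (a_Wsat ha hw)) ?_
    have h1 : ((n : ℂ) • (X : Rb) ^ (n + 1)) • w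
        = (n : ℂ) • ((X : Rb) ^ n • ((X : Rb) • w)) := by
      rw [smul_smul, smul_assoc, ← pow_succ]
    rw [h1]
    exact Submodule.smul_of_tower_mem _ _ (bpow_mem (smulX_Wsat a hw))

lemma Psi_le {a : E →ₗ[ℂ] E} (ha : IsABMod a) (k : ℕ) :
    Psi a k ≤ (bpow 1 (Wsat a k)).restrictScalars ℂ := by
  refine iSup₂_le fun j hj => ?_
  rintro y ⟨z, hz, rfl⟩
  simp only [SetLike.mem_coe, Submodule.restrictScalars_mem] at hz ⊢
  obtain ⟨g, -, rfl⟩ := mem_bpow.1 hz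
  obtain ⟨w, hw, hwe⟩ := mem_bpow.1 (pow_a_bpow ha j (k - j + 1) g)
  rw [← hwe]
  have hj' : j ≤ k := Nat.lt_succ_iff.1 (Finset.mem_range.1 hj)
  have hXw : (X : Rb) ^ (k - j) • w ∈ Wsat a k := by
    have h := smulXpow_Wsat a (k - j) hw
    rwa [show j + (k - j) = k by omega] at h
  have h2 : (X : Rb) ^ (k - j + 1) • w = (X : Rb) ^ 1 • ((X : Rb) ^ (k - j) • w) := by
    rw [smul_smul, ← pow_add, show 1 + (k - j) = k - j + 1 from by omega]
  rw [h2]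
  exact bpow_mem hXw

lemma T_sub_pow {a : E →ₗ[ℂ] E} (ha : IsABMod a) (j : ℕ) (x : E) :
    Tj a (j + 1) x - (a ^ (j + 1)) x ∈ bpow 1 (Wsat a j) := by
  induction j with
  | zero =>
    have h1 : Tj a 1 x = a x := by
      simp [Tj]
    rw [h1, pow_one, sub_self]
    exact zero_mem _
  | succ j ih =>
    have hT : Tj a (j + 2) x
        = a (Tj a (j + 1) x) - ((j + 1 : ℕ) : ℂ) • ((X : Rb) • Tj a (j + 1) x) := by
      have := aT_eq a (j + 1) x
      rw [eq_sub_iff_add_eq, ← this]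
    have hA : (a ^ (j + 2)) x = a ((a ^ (j + 1)) x) := by
      rw [pow_succ', Module.End.mul_apply]
    have key : Tj a (j + 2) x - (a ^ (j + 2)) x
        = a (Tj a (j + 1) x - (a ^ (j + 1)) x)
          - ((j + 1 : ℕ) : ℂ) • ((X : Rb) • Tj a (j + 1) x) := by
      rw [hT, hA, map_sub]
      abel
    rw [key]
    obtain ⟨w, hw, hwe⟩ := mem_bpow.1 ih
    rw [← hwe, pow_one, comm1 ha]
    refine sub_mem (add_mem ?_ ?_) ?_
    · have : (X : Rb) • a w = (X : Rb) ^ 1 • a w := by rw [pow_one]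
      rw [this]
      exact bpow_mem (a_Wsat ha hw)
    · have : (X : Rb) ^ 2 • w = (X : Rb) ^ 1 • ((X : Rb) • w) := by
        rw [smul_smul, pow_one]
        ring_nf
      rw [this]
      exact bpow_mem (smulX_Wsat a hw)
    · refine Submodule.smul_of_tower_mem _ _ ?_
      have : (X : Rb) • Tj a (j + 1) x = (X : Rb) ^ 1 • Tj a (j + 1) x := by rw [pow_one]
      rw [this]
      exact bpow_mem (T_mem_Wsat a (j + 1) x)

lemma Tk1_mem {a : E →ₗ[ℂ] E} (ha : IsABMod a) {k : ℕ} (hk : RegCond a k) (x : E) :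
    Tj a (k + 1) x ∈ bpow 1 (Wsat a k) := by
  have h2 : (a ^ (k + 1)) x ∈ bpow 1 (Wsat a k) := Psi_le ha k (hk x)
  have h3 : Tj a (k + 1) x = (Tj a (k + 1) x - (a ^ (k + 1)) x) + (a ^ (k + 1)) x := by
    abel
  rw [h3]
  exact add_mem (T_sub_pow ha k x) h2

lemma a_Wk {a : E →ₗ[ℂ] E} (ha : IsABMod a) {k : ℕ} (hk : RegCond a k)
    {w : E} (hw : w ∈ Wsat a k) : a w ∈ bpow 1 (Wsat a k) := by
  induction hw using Submodule.span_induction with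
  | mem g hg =>
    simp only [Set.mem_iUnion, Set.mem_range, Finset.mem_range] at hg
    obtain ⟨i, hi, x, rfl⟩ := hg
    have hik : i ≤ k := by omega
    rw [commn ha, aT_eq, smul_add]
    refine add_mem (add_mem ?_ ?_) ?_
    · rcases eq_or_lt_of_le hik with rfl | hlt
      · simpa using Tk1_mem ha hk x
      · have h1 : (X : Rb) ^ (k - i) • Tj a (i + 1) x
            = (X : Rb) ^ 1 • ((X : Rb) ^ (k - (i + 1)) • Tj a (i + 1) x) := by
          rw [smul_smul, ← pow_add]
          congr 2
          omega
        rw [h1]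
        exact bpow_mem (gen_mem_Wsat a (by omega) x)
    · rw [smul_comm, smul_smul, ← pow_succ]
      refine Submodule.smul_of_tower_mem _ _ ?_
      have h1 : (X : Rb) ^ (k - i + 1) • Tj a i x
          = (X : Rb) ^ 1 • ((X : Rb) ^ (k - i) • Tj a i x) := by
        rw [smul_smul, ← pow_add, show 1 + (k - i) = k - i + 1 from by omega]
      rw [h1]
      exact bpow_mem (gen_mem_Wsat a hik x)
    · rw [smul_assoc]
      refine Submodule.smul_of_tower_mem _ _ ?_
      have h1 : (X : Rb) ^ (k - i + 1) • Tj a i x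
          = (X : Rb) ^ 1 • ((X : Rb) ^ (k - i) • Tj a i x) := by
        rw [smul_smul, ← pow_add, show 1 + (k - i) = k - i + 1 from by omega]
      rw [h1]
      exact bpow_mem (gen_mem_Wsat a hik x)
  | zero => simp
  | add u v _ _ h1 h2 => rw [map_add]; exact add_mem h1 h2
  | smul S w hw h =>
    rw [ha S w]
    refine add_mem (Submodule.smul_mem _ S h) ?_
    have h1 : ((X : Rb) ^ 2 * derivative ℂ S) • w
        = (X : Rb) ^ 1 • (((X : Rb) * derivative ℂ S) • w) := by
      rw [smul_smul, pow_one]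
      ring_nf
    rw [h1]
    exact bpow_mem (Submodule.smul_mem _ _ hw)

lemma Xk_T_mem {a : E →ₗ[ℂ] E} (ha : IsABMod a) {k : ℕ} (hk : RegCond a k)
    (j : ℕ) (x : E) : (X : Rb) ^ k • Tj a j x ∈ bpow j (Wsat a k) := by
  induction j with
  | zero =>
    refine mem_bpow.2 ⟨(X : Rb) ^ k • Tj a 0 x, ?_, by rw [pow_zero, one_smul]⟩
    have := gen_mem_Wsat a (Nat.zero_le k) x
    simpa using this
  | succ j ih =>
    obtain ⟨w, hw, hwe⟩ := mem_bpow.1 ih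
    have hT : Tj a (j + 1) x
        = a (Tj a j x) - (j : ℂ) • ((X : Rb) • Tj a j x) := by
      rw [eq_sub_iff_add_eq, ← aT_eq a j x]
    have heq : (X : Rb) ^ k • a (Tj a j x)
        = a ((X : Rb) ^ k • Tj a j x) - ((k : ℂ) • (X : Rb) ^ (k + 1)) • Tj a j x := by
      rw [commn ha]
      abel
    rw [hT, smul_sub, heq, ← hwe]
    have hXw : ∀ c : ℂ, c • ((X : Rb) ^ (j + 1) • w) ∈ bpow (j + 1) (Wsat a k) :=
      fun c => Submodule.smul_of_tower_mem _ _ (bpow_mem hw)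
    have hstep : (X : Rb) ^ (k + 1) • Tj a j x = (X : Rb) ^ (j + 1) • w := by
      rw [pow_succ', mul_smul, ← hwe, ← mul_smul, ← pow_succ']
    refine sub_mem (sub_mem ?_ ?_) ?_
    · rw [commn ha]
      refine add_mem ?_ ?_
      · obtain ⟨v, hv, hve⟩ := mem_bpow.1 (a_Wk ha hk hw)
        rw [← hve, pow_one, smul_smul, ← pow_succ]
        exact bpow_mem hv
      · have h1 : ((j : ℂ) • (X : Rb) ^ (j + 1)) • w = (j : ℂ) • ((X : Rb) ^ (j + 1) • w) := by
          rw [smul_assoc]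
        rw [h1]
        exact hXw _
    · have h1 : ((k : ℂ) • (X : Rb) ^ (k + 1)) • Tj a j x
          = (k : ℂ) • ((X : Rb) ^ (j + 1) • w) := by
        rw [smul_assoc, hstep]
      rw [h1]
      exact hXw _
    · have h1 : (X : Rb) ^ k • ((j : ℂ) • ((X : Rb) • Tj a j x))
          = (j : ℂ) • ((X : Rb) ^ (j + 1) • w) := by
        have hj1 : (j : ℂ) • ((X : Rb) • Tj a j x) = ((j : ℂ) • (X : Rb)) • Tj a j x :=
          (smul_assoc _ _ _).symm
        rw [hj1, smul_smul, mul_smul_comm, ← pow_succ, smul_assoc, hstep]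
      rw [h1]
      exact hXw _

lemma Tj_coe {E' : Submodule Rb E} (a : E →ₗ[ℂ] E) (a' : E' →ₗ[ℂ] E')
    (ha' : ∀ x : E', (a' x : E) = a (x : E)) (j : ℕ) (x : E') :
    ((Tj a' j x : E') : E) = Tj a j (x : E) := by
  induction j with
  | zero => rfl
  | succ j ih =>
    simp only [Tj, LinearMap.comp_apply, LinearMap.sub_apply, LinearMap.smul_apply]
    rw [Submodule.coe_sub, Submodule.coe_smul_of_tower, ha', ih]
    congr 2
    show ((((X : Rb) • Tj a' j x : E') : E)) = (X : Rb) • (Tj a j (x : E))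
    rw [Submodule.coe_smul, ih]

lemma descend {E' : Submodule Rb E} (htor : ∀ x : E, (X : Rb) • x ∈ E' → x ∈ E')
    (j : ℕ) : ∀ z : E, (X : Rb) ^ j • z ∈ E' → z ∈ E' := by
  induction j with
  | zero => intro z hz; simpa using hz
  | succ j ih =>
    intro z hz
    have h1 : (X : Rb) ^ j • ((X : Rb) • z) ∈ E' := by
      rw [smul_smul, ← pow_succ]
      exact hz
    exact htor z (ih _ h1)

/-- If `E′ ⊆ E` is a sub-(a,b)-module of a regular (a,b)-module `E` such that
`E/E′` has no `b`-torsion, then `δ(E′) ≤ δ(E)`. -/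
theorem stmt_10 [Module.Free Rb E] [Module.Finite Rb E]
    (a : E →ₗ[ℂ] E) (ha : IsABMod a) (hreg : IsRegularAB a)
    (E' : Submodule Rb E) (hstab : ∀ x ∈ E', a x ∈ E')
    (a' : E' →ₗ[ℂ] E') (ha' : ∀ x : E', (a' x : E) = a (x : E))
    (htor : ∀ x : E, (X : Rb) • x ∈ E' → x ∈ E') :
    deltaIdx a' ≤ deltaIdx a := by
  have hk : RegCond a (regOrder a) := Nat.sInf_mem hreg
  have hSne : {m | bpow m (Wsat a (regOrder a)) ≤ bpow (regOrder a) (⊤ : Submodule Rb E)}.Nonempty :=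
    ⟨regOrder a, Submodule.smul_mono le_rfl le_top⟩
  have hm : bpow (deltaIdx a) (Wsat a (regOrder a)) ≤ bpow (regOrder a) (⊤ : Submodule Rb E) :=
    Nat.sInf_mem hSne
  set k := regOrder a with hkdef
  set m := deltaIdx a with hmdef
  have hcomm : ∀ (r s : Rb) (y : E), r • s • y = s • r • y := fun r s y => by
    rw [smul_smul, smul_smul, mul_comm]
  have hinj : ∀ u v : E, (X : Rb) ^ k • u = (X : Rb) ^ k • v → u = v := fun u v h =>
    smul_right_injective E (pow_ne_zero _ PowerSeries.X_ne_zero) h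
  have sat : ∀ (j : ℕ) (x : E), ∃ z : E, (X : Rb) ^ m • Tj a j x = (X : Rb) ^ j • z := by
    intro j x
    obtain ⟨w, hw, hwe⟩ := mem_bpow.1 (Xk_T_mem ha hk j x)
    obtain ⟨z, -, hze⟩ := mem_bpow.1 (hm (bpow_mem (n := m) hw))
    refine ⟨z, hinj _ _ ?_⟩
    calc (X : Rb) ^ k • ((X : Rb) ^ m • Tj a j x)
        = (X : Rb) ^ m • ((X : Rb) ^ k • Tj a j x) := hcomm _ _ _
      _ = (X : Rb) ^ m • ((X : Rb) ^ j • w) := by rw [hwe]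
      _ = (X : Rb) ^ j • ((X : Rb) ^ m • w) := hcomm _ _ _
      _ = (X : Rb) ^ j • ((X : Rb) ^ k • z) := by rw [hze]
      _ = (X : Rb) ^ k • ((X : Rb) ^ j • z) := hcomm _ _ _
  have key : ∀ (j : ℕ) (x : E'), ∃ z : E',
      ((X : Rb) ^ m • Tj a' j x : E') = (X : Rb) ^ j • z := by
    intro j x
    obtain ⟨z, hz⟩ := sat j (x : E)
    have hmem : (X : Rb) ^ j • z ∈ E' := by
      rw [← hz, ← Tj_coe a a' ha' j x]
      exact Submodule.smul_mem E' _ (Tj a' j x).2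
    refine ⟨⟨z, descend htor j z hmem⟩, ?_⟩
    apply Subtype.ext
    rw [Submodule.coe_smul, Submodule.coe_smul, Tj_coe a a' ha' j x]
    exact hz
  have hmemS' : bpow m (Wsat a' (regOrder a')) ≤ bpow (regOrder a') (⊤ : Submodule Rb E') := by
    intro y hy
    obtain ⟨w, hw, rfl⟩ := mem_bpow.1 hy
    clear hy
    induction hw using Submodule.span_induction with
    | mem g hg =>
      simp only [Set.mem_iUnion, Set.mem_range, Finset.mem_range] at hg
      obtain ⟨i, hi, x, rfl⟩ := hg
      obtain ⟨z, hz⟩ := key i x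
      have h1 : (X : Rb) ^ m • ((X : Rb) ^ (regOrder a' - i) • Tj a' i x)
          = (X : Rb) ^ (regOrder a') • z := by
        rw [smul_smul, mul_comm, ← smul_smul, hz, smul_smul, ← pow_add,
          show regOrder a' - i + i = regOrder a' from by omega]
      rw [h1]
      exact bpow_mem Submodule.mem_top
    | zero => simpa using Submodule.zero_mem _
    | add u v _ _ h1 h2 => rw [smul_add]; exact add_mem h1 h2
    | smul S w _ h => rw [smul_comm]; exact Submodule.smul_mem _ S h
  exact Nat.sInf_le hmemS'

end
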